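/- arXiv:1603.09569 — 3 statements merged into one kernel-verified Lean document; each statement's English description precedes it below -/
import Mathlib

section
/- Let $m\geq 2$ and let $(a_1,\dots,a_m)$ be a sequence of positive integers with $\gcd(a_1,\dots,a_m)=1$, and set $d_i=\gcd(a_1,\dots,a_i)$. Assume that for each $2\le i\le m$, $a_i/d_i$ lies in the monoid generated by $a_1/d_{i-1},\dots,a_{i-1}/d_{i-1}$ over $\mathbb{Z}_{\ge0}$. Then for every $a$ in the numerical semigroup $a_1\mathbb{Z}_{\ge0}+\cdots+a_m\mathbb{Z}_{\ge0}$ there exists a unique tuple $(k_1,\dots,k_m)\in\mathbb{Z}_{\ge0}^m$ with $0\le k_i\le d_{i-1}/d_i-1$ for $2\le i\le m$ such that $\sum_{i=1}^m a_i k_i = a$. -/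
/-- `dseq a i = gcd(a 1, …, a i)`. -/
def dseq (a : ℕ → ℕ) (i : ℕ) : ℕ := Finset.gcd (Finset.Icc 1 i) a

/-- membership in the numerical semigroup generated by `a 1, …, a m`. -/
def InSemigroup (m : ℕ) (a : ℕ → ℕ) (x : ℕ) : Prop :=
  ∃ c : ℕ → ℕ, x = ∑ i ∈ Finset.Icc 1 m, c i * a i

/-- `(a 1, …, a m)` is a telescopic sequence. -/
def Telescopic (m : ℕ) (a : ℕ → ℕ) : Prop :=
  2 ≤ m ∧ (∀ i, 1 ≤ i → i ≤ m → 0 < a i) ∧ dseq a m = 1 ∧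
  ∀ i, 2 ≤ i → i ≤ m → ∃ c : ℕ → ℕ,
    a i / dseq a i = ∑ j ∈ Finset.Icc 1 (i - 1), c j * (a j / dseq a (i - 1))

/-- membership in the restricted exponent set `B(A_m)`. -/
def InB (m : ℕ) (a : ℕ → ℕ) (k : ℕ → ℕ) : Prop :=
  (∀ j, (j = 0 ∨ m < j) → k j = 0) ∧
  ∀ i, 2 ≤ i → i ≤ m → k i ≤ dseq a (i - 1) / dseq a i - 1



lemma dseq_dvd (a : ℕ → ℕ) {i j : ℕ} (h1 : 1 ≤ j) (h2 : j ≤ i) : dseq a i ∣ a j :=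
  Finset.gcd_dvd (Finset.mem_Icc.2 ⟨h1, h2⟩)

lemma dseq_pos (a : ℕ → ℕ) {i : ℕ} (hi : 1 ≤ i) (ha : 0 < a 1) : 0 < dseq a i := by
  rcases Nat.eq_zero_or_pos (dseq a i) with h | h
  · exfalso
    have := Finset.gcd_eq_zero_iff.mp h 1 (Finset.mem_Icc.2 ⟨le_refl 1, hi⟩)
    omega
  · exact h

lemma dseq_succ (a : ℕ → ℕ) (n : ℕ) : dseq a (n+1) = Nat.gcd (a (n+1)) (dseq a n) := by
  unfold dseq
  rw [show Finset.Icc 1 (n+1) = insert (n+1) (Finset.Icc 1 n) by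
    ext x; simp [Finset.mem_Icc, Finset.mem_insert]; omega]
  rw [Finset.gcd_insert]
  rfl

lemma dseq_one (a : ℕ → ℕ) : dseq a 1 = a 1 := by
  unfold dseq
  rw [show Finset.Icc 1 1 = {1} from rfl, Finset.gcd_singleton]
  simp

lemma dseq_div (a : ℕ → ℕ) {i d : ℕ} (hd : ∀ j, 1 ≤ j → j ≤ i → d ∣ a j) :
    dseq a i = d * dseq (fun j => a j / d) i := by
  unfold dseq
  have h : ((Finset.Icc 1 i).gcd fun j => d * (a j / d)) =
      normalize d * (Finset.Icc 1 i).gcd fun j => a j / d := Finset.gcd_mul_left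
  simp only [normalize_eq] at h
  rw [← h]
  apply Finset.gcd_congr rfl
  intro j hj
  have := hd j (Finset.mem_Icc.1 hj).1 (Finset.mem_Icc.1 hj).2
  exact (Nat.mul_div_cancel' this).symm


lemma key (m : ℕ) : 1 ≤ m → ∀ a : ℕ → ℕ, 0 < a 1 → dseq a m = 1 →
    (∀ i, 2 ≤ i → i ≤ m → ∃ c : ℕ → ℕ,
      a i / dseq a i = ∑ j ∈ Finset.Icc 1 (i - 1), c j * (a j / dseq a (i - 1))) →
    ∀ x : ℕ, InSemigroup m a x →
    ∃! k : ℕ → ℕ, InB m a k ∧ ∑ i ∈ Finset.Icc 1 m, a i * k i = x := by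
  induction m with
  | zero => omega
  | succ n ih =>
    intro _ a ha1 hgcd htel x hx
    rcases Nat.eq_zero_or_pos n with rfl | hn
    · -- base case m = 1
      have ha11 : a 1 = 1 := by rw [← dseq_one a]; exact hgcd
      refine ⟨fun j => if j = 1 then x else 0, ⟨⟨?_, ?_⟩, ?_⟩, ?_⟩
      · intro j hj; simp only [if_neg (by omega : j ≠ 1)]
      · intro i h2 h1; omega
      · simp [ha11]
      · rintro k ⟨⟨hz, _⟩, hs⟩
        funext j
        rcases Nat.lt_trichotomy j 1 with h | rfl | h
        · simp only [if_neg (by omega : j ≠ 1)]; exact hz j (Or.inl (by omega))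
        · simp only [if_pos rfl]
          simpa [ha11] using hs
        · simp only [if_neg (by omega : j ≠ 1)]; exact hz j (Or.inr h)
    · -- inductive step, m = n+1, n ≥ 1
      have hd_dvd : ∀ j, 1 ≤ j → j ≤ n → dseq a n ∣ a j := fun j h1 h2 => dseq_dvd a h1 h2
      set d := dseq a n with hd
      have hdpos : 0 < d := dseq_pos a hn ha1
      set a' := fun j => a j / d with ha'
      have ha'mul : ∀ j, 1 ≤ j → j ≤ n → a j = d * a' j := fun j h1 h2 =>
        (Nat.mul_div_cancel' (hd_dvd j h1 h2)).symm
      have hdseq' : ∀ i, i ≤ n → dseq a i = d * dseq a' i := fun i hi =>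
        dseq_div a (fun j h1 h2 => hd_dvd j h1 (h2.trans hi))
      have ha'1 : 0 < a' 1 := by
        have := ha'mul 1 le_rfl hn
        rcases Nat.eq_zero_or_pos (a' 1) with h | h
        · rw [h, Nat.mul_zero] at this; omega
        · exact h
      have hgcd' : dseq a' n = 1 := by
        have h1 := hdseq' n le_rfl
        have : d * dseq a' n = d * 1 := by rw [Nat.mul_one]; exact h1.symm
        exact Nat.eq_of_mul_eq_mul_left hdpos this
      have hratio : ∀ i, 2 ≤ i → i ≤ n →
          dseq a (i-1) / dseq a i = dseq a' (i-1) / dseq a' i := by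
        intro i h2 hi
        rw [hdseq' (i-1) (by omega), hdseq' i hi, Nat.mul_div_mul_left _ _ hdpos]
      have htel' : ∀ i, 2 ≤ i → i ≤ n → ∃ c : ℕ → ℕ,
          a' i / dseq a' i = ∑ j ∈ Finset.Icc 1 (i - 1), c j * (a' j / dseq a' (i - 1)) := by
        intro i h2 hi
        obtain ⟨c, hc⟩ := htel i h2 (by omega)
        refine ⟨c, ?_⟩
        have e1 : a' i / dseq a' i = a i / dseq a i := by
          rw [ha'mul i (by omega) hi, hdseq' i hi, Nat.mul_div_mul_left _ _ hdpos]
        rw [e1, hc]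
        apply Finset.sum_congr rfl
        intro j hj
        have hj' := Finset.mem_Icc.1 hj
        rw [ha'mul j hj'.1 (by omega), hdseq' (i-1) (by omega),
          Nat.mul_div_mul_left _ _ hdpos]
      have hgcdm : Nat.gcd d (a (n+1)) = 1 := by
        rw [Nat.gcd_comm, ← dseq_succ]; exact hgcd
      have hn1 : n + 1 - 1 = n := by omega
      have hdm : dseq a n / dseq a (n+1) = d := by
        rw [hgcd, Nat.div_one, hd]
      -- telescopic at top
      obtain ⟨c', hc'⟩ := htel (n+1) (by omega) le_rfl
      rw [hn1] at hc'
      have hc'2 : a (n+1) = ∑ j ∈ Finset.Icc 1 n, c' j * (a j / d) := by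
        have h1 : a (n+1) / dseq a (n+1) = a (n+1) := by rw [hgcd, Nat.div_one]
        rw [← h1, hc', hd]
      have hkey : d * a (n+1) = ∑ j ∈ Finset.Icc 1 n, c' j * a j := by
        rw [hc'2, Finset.mul_sum]
        apply Finset.sum_congr rfl
        intro j hj
        have hj' := Finset.mem_Icc.1 hj
        rw [Nat.mul_left_comm, Nat.mul_div_cancel' (hd_dvd j hj'.1 hj'.2)]
      obtain ⟨c, hc⟩ := hx
      rw [Finset.sum_Icc_succ_top (by omega : 1 ≤ n + 1)] at hc
      set q := c (n+1) / d with hq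
      set r := c (n+1) % d with hr
      have hrd : r < d := Nat.mod_lt _ hdpos
      set y' := ∑ j ∈ Finset.Icc 1 n, (c j + q * c' j) * a' j with hy'
      have hxsplit : x = d * y' + a (n+1) * r := by
        have e1 : ∑ j ∈ Finset.Icc 1 n, (c j + q * c' j) * a j
            = ∑ j ∈ Finset.Icc 1 n, c j * a j + q * (d * a (n+1)) := by
          rw [hkey, Finset.mul_sum, ← Finset.sum_add_distrib]
          apply Finset.sum_congr rfl; intro j _; ring
        have e2 : d * y' = ∑ j ∈ Finset.Icc 1 n, (c j + q * c' j) * a j := by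
          rw [hy', Finset.mul_sum]
          apply Finset.sum_congr rfl
          intro j hj
          have hj' := Finset.mem_Icc.1 hj
          rw [ha'mul j hj'.1 hj'.2]; ring
        have e3 : c (n+1) = d * q + r := (Nat.div_add_mod (c (n+1)) d).symm
        rw [e2, e1, hc, e3]; ring
      have hsum_eq : ∀ k : ℕ → ℕ, d * (∑ i ∈ Finset.Icc 1 n, a' i * k i)
          = ∑ i ∈ Finset.Icc 1 n, a i * k i := by
        intro k
        rw [Finset.mul_sum]
        apply Finset.sum_congr rfl
        intro j hj
        have hj' := Finset.mem_Icc.1 hj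
        rw [ha'mul j hj'.1 hj'.2]; ring
      obtain ⟨k', ⟨⟨hk'z, hk'b⟩, hk'sum⟩, hk'uniq⟩ :=
        ih hn a' ha'1 hgcd' htel' y' ⟨fun j => c j + q * c' j, rfl⟩
      set K : ℕ → ℕ := fun j => if j = n + 1 then r else k' j with hK
      have hKm : K (n+1) = r := by simp only [hK, if_pos rfl]
      have hKlt : ∀ j, j ≠ n + 1 → K j = k' j := by
        intro j h; simp only [hK, if_neg h]
      refine ⟨K, ⟨⟨?_, ?_⟩, ?_⟩, ?_⟩
      · intro j hj
        rw [hKlt j (by omega)]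
        exact hk'z j (by omega)
      · intro i h2 hi
        rcases Nat.lt_or_ge i (n+1) with h | h
        · rw [hKlt i (by omega), hratio i h2 (by omega)]
          exact hk'b i h2 (by omega)
        · have hieq : i = n + 1 := by omega
          subst hieq
          rw [hKm, hn1, hdm]; omega
      · rw [Finset.sum_Icc_succ_top (by omega : 1 ≤ n + 1), hKm]
        have e : ∑ i ∈ Finset.Icc 1 n, a i * K i
            = ∑ i ∈ Finset.Icc 1 n, a i * k' i := by
          apply Finset.sum_congr rfl
          intro j hj
          have hj' := Finset.mem_Icc.1 hj
          rw [hKlt j (by omega)]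
        rw [e, ← hsum_eq k', hk'sum, hxsplit]
      · rintro k₂ ⟨⟨hz2, hb2⟩, hs2⟩
        rw [Finset.sum_Icc_succ_top (by omega : 1 ≤ n + 1)] at hs2
        set t₂ := ∑ i ∈ Finset.Icc 1 n, a' i * k₂ i with ht₂
        have hS2 : ∑ i ∈ Finset.Icc 1 n, a i * k₂ i = d * t₂ := (hsum_eq k₂).symm
        have hk2m : k₂ (n+1) = r := by
          have h1 : a (n+1) * k₂ (n+1) + d * t₂ = x := by rw [← hs2, hS2]; ring
          have h2 : a (n+1) * r + d * y' = x := by rw [hxsplit]; ring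
          have hmod : (a (n+1) * k₂ (n+1)) % d = (a (n+1) * r) % d := by
            calc (a (n+1) * k₂ (n+1)) % d = (a (n+1) * k₂ (n+1) + d * t₂) % d := by
                  rw [Nat.add_mul_mod_self_left]
              _ = (a (n+1) * r + d * y') % d := by rw [h1, h2]
              _ = (a (n+1) * r) % d := by rw [Nat.add_mul_mod_self_left]
          have hmod2 : k₂ (n+1) % d = r % d :=
            Nat.ModEq.cancel_left_of_coprime hgcdm hmod
          have hbm := hb2 (n+1) (by omega) le_rfl
          rw [hn1, hdm] at hbm
          rw [Nat.mod_eq_of_lt (by omega), Nat.mod_eq_of_lt hrd] at hmod2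
          exact hmod2
        set k₂' : ℕ → ℕ := fun j => if j = n + 1 then 0 else k₂ j with hk₂'
        have hklt2 : ∀ j, j ≠ n + 1 → k₂' j = k₂ j := by
          intro j h; simp only [hk₂', if_neg h]
        have hsum2' : ∑ i ∈ Finset.Icc 1 n, a' i * k₂' i = y' := by
          have e : ∑ i ∈ Finset.Icc 1 n, a' i * k₂' i = t₂ := by
            apply Finset.sum_congr rfl
            intro j hj
            have hj' := Finset.mem_Icc.1 hj
            rw [hklt2 j (by omega)]
          rw [e]
          have h1 : a (n+1) * k₂ (n+1) + d * t₂ = x := by rw [← hs2, hS2]; ring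
          have h2 : a (n+1) * r + d * y' = x := by rw [hxsplit]; ring
          rw [hk2m] at h1
          have h3 : d * t₂ = d * y' := by omega
          exact Nat.eq_of_mul_eq_mul_left hdpos h3
        have hB2' : InB n a' k₂' := by
          constructor
          · intro j hj
            by_cases h : j = n + 1
            · simp only [hk₂', if_pos h]
            · rw [hklt2 j h]; exact hz2 j (by omega)
          · intro i h2 hi
            rw [hklt2 i (by omega), ← hratio i h2 hi]
            exact hb2 i h2 (by omega)
        have hk2'eq : k₂' = k' := hk'uniq k₂' ⟨hB2', hsum2'⟩
        funext j
        by_cases h : j = n + 1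
        · rw [h, hk2m, hKm]
        · rw [hKlt j h, ← hk2'eq, hklt2 j h]

/-- Unique representation with exponents in B(A_m). -/
theorem stmt0 (m : ℕ) (a : ℕ → ℕ) (h : Telescopic m a)
    (x : ℕ) (hx : InSemigroup m a x) :
    ∃! k : ℕ → ℕ, InB m a k ∧ ∑ i ∈ Finset.Icc 1 m, a i * k i = x := by
  obtain ⟨hm, hpos, hgcd, htel⟩ := h
  exact key m (by omega) a (hpos 1 le_rfl (by omega)) hgcd htel x hx
end

section
/- Let $(a_1,\dots,a_m)$ be a telescopic sequence with $d_i=\gcd(a_1,\dots,a_i)$, and for $2\le i\le m$ let $(\ell_{i,1},\dots,\ell_{i,m})$ be the unique element of $B(A_m)$ with $\sum_{j=1}^m a_j\ell_{i,j}=a_i\, d_{i-1}/d_i$. Then $\ell_{i,j}=0$ for all $j\ge i$. -/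
lemma dseq_step (a : ℕ → ℕ) (t : ℕ) (ht : 1 ≤ t) :
    dseq a t = Nat.gcd (a t) (dseq a (t - 1)) := by
  have hIcc : Finset.Icc 1 t = insert t (Finset.Icc 1 (t - 1)) := by
    ext x; simp only [Finset.mem_Icc, Finset.mem_insert]; omega
  rw [dseq, hIcc, Finset.gcd_insert]
  rfl

/-- The row exponents of the defining equations vanish for j ≥ i. -/
theorem stmt1 (m : ℕ) (a : ℕ → ℕ) (h : Telescopic m a)
    (i : ℕ) (hi2 : 2 ≤ i) (him : i ≤ m)
    (l : ℕ → ℕ) (hB : InB m a l)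
    (hsum : ∑ j ∈ Finset.Icc 1 m, a j * l j = a i * (dseq a (i - 1) / dseq a i)) :
    ∀ j, i ≤ j → l j = 0 := by
  obtain ⟨hm2, hpos, -, -⟩ := h
  obtain ⟨hB0, hBle⟩ := hB
  have hd_dvd : ∀ t j, 1 ≤ j → j ≤ t → dseq a t ∣ a j := fun t j h1 h2 =>
    Finset.gcd_dvd (Finset.mem_Icc.mpr ⟨h1, h2⟩)
  have hdpos : ∀ t, 1 ≤ t → 0 < dseq a t := fun t ht =>
    Nat.pos_of_dvd_of_pos (hd_dvd t 1 le_rfl ht) (hpos 1 le_rfl (by omega))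
  -- key lemma: if everything above t vanishes, then l t vanishes, for i ≤ t ≤ m
  have key : ∀ t, i ≤ t → t ≤ m → (∀ k, t < k → l k = 0) → l t = 0 := by
    intro t hit htm hz
    set q : ℕ := dseq a (i - 1) / dseq a i with hq
    set D : ℕ := dseq a (t - 1) with hD
    set d : ℕ := dseq a t with hd
    have hDpos : 0 < D := hdpos (t - 1) (by omega)
    have hdD : Nat.gcd (a t) D = d := (dseq_step a t (by omega)).symm
    have hdvdD : d ∣ D := hdD ▸ Nat.gcd_dvd_right _ _
    have hdvda : d ∣ a t := hdD ▸ Nat.gcd_dvd_left _ _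
    have hdpos' : 0 < d := hdpos t (by omega)
    have hcop : Nat.Coprime (D / d) (a t / d) := by
      have := Nat.coprime_div_gcd_div_gcd (m := a t) (n := D) (by rw [hdD]; exact hdpos')
      rw [hdD] at this
      exact this.symm
    have main : ∀ x, D ∣ a t * x → D / d ∣ x := by
      intro x hx
      obtain ⟨c, hc⟩ := hx
      have hc' : (D / d) * c = (a t / d) * x := by
        apply Nat.eq_of_mul_eq_mul_left hdpos'
        calc d * (D / d * c) = (d * (D / d)) * c := by ring
          _ = D * c := by rw [Nat.mul_div_cancel' hdvdD]
          _ = a t * x := hc.symm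
          _ = (d * (a t / d)) * x := by rw [Nat.mul_div_cancel' hdvda]
          _ = d * ((a t / d) * x) := by ring
      exact hcop.dvd_of_dvd_mul_left ⟨c, hc'.symm⟩
    -- rewrite the sum
    have hsplit : ∑ j ∈ Finset.Icc 1 m, a j * l j
        = (∑ j ∈ Finset.Icc 1 (t - 1), a j * l j) + a t * l t := by
      have h1 : ∑ j ∈ Finset.Icc 1 m, a j * l j = ∑ j ∈ Finset.Icc 1 t, a j * l j := by
        rw [← Finset.sum_subset (Finset.Icc_subset_Icc_right htm)]
        intro x hx hx'
        simp only [Finset.mem_Icc] at hx hx'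
        rw [hz x (by omega), mul_zero]
      have hIcc : Finset.Icc 1 t = insert t (Finset.Icc 1 (t - 1)) := by
        ext x; simp only [Finset.mem_Icc, Finset.mem_insert]; omega
      rw [h1, hIcc, Finset.sum_insert (by simp [Finset.mem_Icc]; omega), add_comm]
    set S : ℕ := ∑ j ∈ Finset.Icc 1 (t - 1), a j * l j with hS
    have hDS : D ∣ S := Finset.dvd_sum fun j hj => by
      have hj' := Finset.mem_Icc.mp hj
      exact Dvd.dvd.mul_right (hd_dvd (t - 1) j hj'.1 hj'.2) _
    have heq : S + a t * l t = a i * q := by rw [← hsplit, hsum]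
    have hbound : l t ≤ D / d - 1 := hBle t (by omega) htm
    have hDd_pos : 0 < D / d := Nat.div_pos (Nat.le_of_dvd hDpos hdvdD) hdpos'
    rcases eq_or_lt_of_le hit with hti | hti
    · -- t = i
      have hqD : q = D / d := by simp only [hq, hD, hd, hti]
      rw [hti] at heq
      have hle : l t ≤ q := by
        have h1 : a t * l t ≤ a t * q := by omega
        exact Nat.le_of_mul_le_mul_left h1 (hpos t (by omega) htm)
      obtain ⟨e, he⟩ : ∃ e, q = l t + e := ⟨q - l t, by omega⟩
      have hSeq : S = a t * e := by
        have h2 : S + a t * l t = a t * l t + a t * e := by rw [heq, he, Nat.mul_add]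
        omega
      have hdvde : D / d ∣ e := main e (hSeq ▸ hDS)
      have h1 : 1 ≤ e := by omega
      have := Nat.le_of_dvd h1 hdvde
      omega
    · -- i < t
      have hDa : D ∣ a i * q := Dvd.dvd.mul_right (hd_dvd (t - 1) i (by omega) (by omega)) _
      have hDlt : D ∣ a t * l t := by
        have h3 : a t * l t = a i * q - S := by omega
        rw [h3]
        exact Nat.dvd_sub hDa hDS
      have hdvdl : D / d ∣ l t := main _ hDlt
      by_contra hne
      have := Nat.le_of_dvd (Nat.pos_of_ne_zero hne) hdvdl
      omega
  -- downward induction bookkeeping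
  suffices H : ∀ n j, i ≤ j → m ≤ j + n → l j = 0 by
    intro j hj; exact H m j hj (by omega)
  intro n
  induction n with
  | zero =>
    intro j hij hm
    rcases Nat.lt_or_ge m j with h' | h'
    · exact hB0 j (Or.inr h')
    · have hjm : j = m := by omega
      exact key j hij (by omega) fun k hk => hB0 k (Or.inr (by omega))
  | succ n ih =>
    intro j hij hm
    rcases le_or_gt m (j + n) with h' | h'
    · exact ih j hij h'
    · have hjm : j ≤ m := by omega
      exact key j hij hjm fun k hk => by
        rcases le_or_gt k m with hk' | hk'
        · exact ih k (by omega) (by omega)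
        · exact hB0 k (Or.inr hk')
end

section
/- Let $m\ge2$ and for $2\le i\le m$ let $\ell_{i,j}$ ($1\le j\le i-1$) be nonnegative integers with $\sum_{j=1}^{i-1}a_j\ell_{i,j}=a_i d_{i-1}/d_i$ for positive integers $a_1,\dots,a_m$ with $d_i=\gcd(a_1,\dots,a_i)$. Consider the $(m-1)\times m$ matrix $M$ with rows indexed by $i=2,\dots,m$, where $M_{i,j}=-\ell_{i,j}$ for $j<i$, $M_{i,i}=d_{i-1}/d_i$, and $M_{i,j}=0$ for $j>i$. Let $\epsilon_k$ denote the determinant of the $(m-1)\times(m-1)$ matrix obtained by deleting the $k$-th column of $M$. Then $\epsilon_k=(-1)^{k+1}a_k$ for all $1\le k\le m$. -/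
lemma dseq_succ_dvd (a : ℕ → ℕ) (i : ℕ) : dseq a (i+1) ∣ dseq a i := by
  apply Finset.dvd_gcd
  intro b hb
  exact Finset.gcd_dvd (by
    simp only [Finset.mem_Icc] at hb ⊢
    omega)

lemma dseq_tele (a : ℕ → ℕ) (n : ℕ) :
    (∏ i ∈ Finset.range n, (dseq a (i+1) / dseq a (i+2))) * dseq a (n+1) = dseq a 1 := by
  induction n with
  | zero => simp
  | succ n ih =>
    rw [Finset.prod_range_succ, mul_assoc, Nat.div_mul_cancel (dseq_succ_dvd a (n+1)), ih]

open Matrix in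
/-- The minors of the matrix M of the telescopic defining data satisfy
ε_k = (-1)^{k+1} a_k (with paper index k; here k is 0-based so the sign is (-1)^k). -/
theorem stmt8 (n : ℕ) (hn : 1 ≤ n) (a : ℕ → ℕ)
    (ha : ∀ i, 1 ≤ i → i ≤ n + 1 → 0 < a i) (hgcd : dseq a (n + 1) = 1)
    (l : ℕ → ℕ → ℕ)
    (hl : ∀ i, 2 ≤ i → i ≤ n + 1 →
      ∑ j ∈ Finset.Icc 1 (i - 1), a j * l i j = a i * (dseq a (i - 1) / dseq a i))
    (M : Matrix (Fin n) (Fin (n + 1)) ℤ)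
    (hM : ∀ i j, M i j =
      if ((j : ℕ) + 1) < ((i : ℕ) + 2) then -(l ((i : ℕ) + 2) ((j : ℕ) + 1) : ℤ)
      else if ((j : ℕ) + 1) = ((i : ℕ) + 2) then
        ((dseq a ((i : ℕ) + 1) / dseq a ((i : ℕ) + 2) : ℕ) : ℤ)
      else 0)
    (k : Fin (n + 1)) :
    (M.submatrix id k.succAbove).det = (-1) ^ (k : ℕ) * (a ((k : ℕ) + 1) : ℤ) := by
  set v : Fin (n + 1) → ℤ := fun j => (-1) ^ (j : ℕ) * (M.submatrix id j.succAbove).det with hv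
  set av : Fin (n + 1) → ℤ := fun j => (a ((j : ℕ) + 1) : ℤ) with hav
  -- Step A : M *ᵥ av = 0
  have hA : M *ᵥ av = 0 := by
    funext i
    have hi2 : (i : ℕ) + 2 ≤ n + 1 := by omega
    have key := hl ((i : ℕ) + 2) (by omega) hi2
    simp only [show (i:ℕ) + 2 - 1 = (i:ℕ) + 1 from rfl] at key
    have hterm : ∀ j : Fin (n + 1), M i j * av j =
        (fun j : ℕ => if j < (i : ℕ) + 1 then -(l ((i : ℕ) + 2) (j + 1) : ℤ) * (a (j + 1) : ℤ)
          else if j = (i : ℕ) + 1 then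
            ((dseq a ((i : ℕ) + 1) / dseq a ((i : ℕ) + 2) : ℕ) : ℤ) * (a (j + 1) : ℤ)
          else 0) (j : ℕ) := by
      intro j
      rw [hM]
      simp only [hav]
      rcases lt_trichotomy ((j : ℕ)) ((i : ℕ) + 1) with h | h | h
      · simp [h, show (j:ℕ) + 1 < (i:ℕ) + 2 by omega]
      · simp [h, show ¬((i:ℕ) + 1 + 1 < (i:ℕ) + 2) by omega]
      · simp [show ¬((j:ℕ) + 1 < (i:ℕ) + 2) by omega, show (j:ℕ) + 1 ≠ (i:ℕ) + 2 by omega,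
          show ¬((j:ℕ) < (i:ℕ) + 1) by omega, show (j:ℕ) ≠ (i:ℕ) + 1 by omega]
    rw [Matrix.mulVec, Pi.zero_apply]
    unfold dotProduct
    rw [Finset.sum_congr rfl fun j _ => hterm j,
      Fin.sum_univ_eq_sum_range (fun j : ℕ => if j < (i : ℕ) + 1 then -(l ((i : ℕ) + 2) (j + 1) : ℤ) * (a (j + 1) : ℤ)
          else if j = (i : ℕ) + 1 then
            ((dseq a ((i : ℕ) + 1) / dseq a ((i : ℕ) + 2) : ℕ) : ℤ) * (a (j + 1) : ℤ)
          else 0) (n+1)]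
    rw [← Finset.sum_subset (Finset.range_subset_range.2 hi2) (by
      intro x _ hx
      simp only [Finset.mem_range] at hx
      simp [show ¬(x < (i:ℕ)+1) by omega, show x ≠ (i:ℕ)+1 by omega])]
    rw [Finset.sum_range_succ]
    simp only [lt_irrefl, if_false, if_pos rfl, lt_self_iff_false]
    have hsum : ∑ x ∈ Finset.range ((i : ℕ) + 1),
        (if x < (i : ℕ) + 1 then -(l ((i : ℕ) + 2) (x + 1) : ℤ) * (a (x + 1) : ℤ)
          else if x = (i : ℕ) + 1 then
            ((dseq a ((i : ℕ) + 1) / dseq a ((i : ℕ) + 2) : ℕ) : ℤ) * (a (x + 1) : ℤ)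
          else 0)
        = -((∑ j ∈ Finset.Icc 1 ((i : ℕ) + 1), a j * l ((i : ℕ) + 2) j : ℕ) : ℤ) := by
      rw [show Finset.Icc 1 ((i:ℕ) + 1) = Finset.Ico 1 ((i:ℕ) + 2) by rw [← Finset.Ico_add_one_right_eq_Icc]; rfl,
        Finset.sum_Ico_eq_sum_range]
      simp only [show (i:ℕ) + 2 - 1 = (i:ℕ) + 1 from rfl]
      push_cast
      rw [← Finset.sum_neg_distrib]
      apply Finset.sum_congr rfl
      intro x hx
      simp only [Finset.mem_range] at hx
      simp only [if_pos hx]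
      ring_nf
    rw [hsum, key]
    push_cast
    ring
  -- Step B : M *ᵥ v = 0
  have hB : M *ᵥ v = 0 := by
    funext i
    have hN : (Matrix.of (Fin.cons (M i) M) : Matrix (Fin (n+1)) (Fin (n+1)) ℤ).det = 0 := by
      apply Matrix.det_zero_of_row_eq (Fin.succ_ne_zero i).symm
      funext q
      rfl
    rw [Matrix.det_succ_row_zero] at hN
    have hsub : ∀ j : Fin (n+1),
        (Matrix.of (Fin.cons (M i) M) : Matrix (Fin (n+1)) (Fin (n+1)) ℤ).submatrix
          Fin.succ j.succAbove = M.submatrix id j.succAbove := by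
      intro j
      ext p q
      rfl
    rw [Matrix.mulVec, Pi.zero_apply]
    unfold dotProduct
    rw [← hN]
    apply Finset.sum_congr rfl
    intro j _
    rw [hsub j]
    simp only [hv, show ∀ j, (Matrix.of (Fin.cons (M i) M) : Matrix (Fin (n+1)) (Fin (n+1)) ℤ) 0 j = M i j from fun j => rfl, Matrix.of_apply, Fin.cons_zero]
    ring
  -- Step C : the 0-th minor equals a 1
  have hC0 : (M.submatrix id Fin.succ).det = (a 1 : ℤ) := by
    rw [Matrix.det_of_lowerTriangular _ ?_]
    · have hdiag : ∀ i : Fin n, (M.submatrix id Fin.succ) i i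
          = ((dseq a ((i:ℕ)+1) / dseq a ((i:ℕ)+2) : ℕ) : ℤ) := by
        intro i
        rw [Matrix.submatrix_apply, id_eq, hM]
        simp
      rw [Finset.prod_congr rfl fun i _ => hdiag i,
        Fin.prod_univ_eq_prod_range (fun i : ℕ => ((dseq a (i+1) / dseq a (i+2) : ℕ) : ℤ)) n,
        ← Nat.cast_prod]
      have := dseq_tele a n
      rw [hgcd, mul_one, dseq_one] at this
      rw [this]
    · intro i j hij
      have hij' : (i:ℕ) < (j:ℕ) := hij
      rw [Matrix.submatrix_apply, id_eq, hM]
      simp only [Fin.val_succ]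
      rw [if_neg (by omega), if_neg (by omega)]
  -- Step D : conclude
  have ha1 : (a 1 : ℤ) ≠ 0 := by
    exact_mod_cast (ha 1 le_rfl (by omega)).ne'
  have hw0 : v 0 - av 0 = 0 := by
    simp only [hv, hav, Fin.val_zero, pow_zero, one_mul, Fin.succAbove_zero, hC0]
    simp
  set w : Fin (n+1) → ℤ := fun j => v j - av j with hwdef
  have hMw : M *ᵥ w = 0 := by
    have : M *ᵥ w = M *ᵥ v - M *ᵥ av := by
      rw [← Matrix.mulVec_sub]
      rfl
    rw [this, hA, hB, sub_zero]
  have hker : (M.submatrix id Fin.succ) *ᵥ (fun p : Fin n => w p.succ) = 0 := by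
    funext i
    have hw0' : w 0 = 0 := hw0
    simp only [Pi.zero_apply, Matrix.mulVec, dotProduct, Matrix.submatrix_apply, id_eq]
    have h1 : (M *ᵥ w) i = 0 := congrFun hMw i
    simp only [Matrix.mulVec, dotProduct, Pi.zero_apply] at h1
    rw [Fin.sum_univ_succ, hw0', mul_zero, zero_add] at h1
    exact h1
  have hzero : ∀ p : Fin n, w p.succ = 0 := by
    intro p
    have h2 := congrArg (fun x => (M.submatrix id Fin.succ).adjugate *ᵥ x) hker
    simp only [Matrix.mulVec_mulVec, Matrix.adjugate_mul, Matrix.smul_mulVec,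
      Matrix.one_mulVec, Matrix.mulVec_zero, hC0] at h2
    have h3 := congrFun h2 p
    simp only [Pi.smul_apply, smul_eq_mul, Pi.zero_apply] at h3
    rcases mul_eq_zero.1 h3 with h | h
    · exact absurd h ha1
    · exact h
  have hvav : ∀ j : Fin (n+1), v j = av j := by
    intro j
    have : w j = 0 := by
      rcases Fin.eq_zero_or_eq_succ j with rfl | ⟨p, rfl⟩
      · exact hw0
      · exact hzero p
    have := this
    simp only [hwdef, sub_eq_zero] at this
    exact this
  have hk := hvav k
  simp only [hv, hav] at hk
  have h1 : ((-1:ℤ))^(k:ℕ) * ((-1:ℤ))^(k:ℕ) = 1 := by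
    rw [← pow_add]
    exact Even.neg_one_pow ⟨(k:ℕ), rfl⟩
  calc (M.submatrix id k.succAbove).det
      = ((-1:ℤ))^(k:ℕ) * ((-1:ℤ))^(k:ℕ) * (M.submatrix id k.succAbove).det := by
        rw [h1, one_mul]
    _ = ((-1:ℤ))^(k:ℕ) * ((-1:ℤ))^(k:ℕ) * (M.submatrix id k.succAbove).det := rfl
    _ = ((-1:ℤ))^(k:ℕ) * (a ((k:ℕ)+1) : ℤ) := by rw [mul_assoc, hk]
end
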